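/- Let r be an odd prime and let α, β ∈ ZMod r. Define γ(α,β) to be the number of j ∈ ZMod r such that (α·j + β).val ≤ j.val. Then: γ(α,β) = r if α = 0 and β = 0; γ(α,β) = r − β.val if α = 0 and β ≠ 0; γ(α,β) = r if α = 1 and β = 0; γ(α,β) = β.val if α = 1 and β ≠ 0; and γ(α,β) = (r+1)/2 in all other cases (i.e. when α ≠ 0 and α ≠ 1). -/

import Mathlib

open Finset

private lemma card_val_transfer (r : ℕ) [NeZero r] (P : ℕ → Prop) [DecidablePred P] :
    (Finset.univ.filter (fun j : ZMod r => P j.val)).card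
      = ((Finset.range r).filter P).card := by
  refine Finset.card_nbij' (fun j => j.val) (fun k => (k : ZMod r)) ?_ ?_ ?_ ?_
  · intro j hj
    simp only [Finset.mem_coe, mem_filter, mem_range, mem_univ, true_and] at *
    exact ⟨ZMod.val_lt j, hj⟩
  · intro k hk
    simp only [Finset.mem_coe, mem_filter, mem_range, mem_univ, true_and] at *
    rw [ZMod.val_cast_of_lt hk.1]; exact hk.2
  · intro j _; simp [ZMod.natCast_val, ZMod.cast_id]
  · intro k hk; simp only [Finset.mem_coe, mem_filter, mem_range] at hk; exact ZMod.val_cast_of_lt hk.1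

private lemma sum_val_transfer (r : ℕ) [NeZero r] (f : ℕ → ℕ) :
    ∑ j : ZMod r, f j.val = ∑ k ∈ Finset.range r, f k := by
  refine Finset.sum_nbij' (fun j => j.val) (fun k => (k : ZMod r)) ?_ ?_ ?_ ?_ (fun _ _ => rfl)
  · intro j _; exact mem_range.2 (ZMod.val_lt j)
  · intro k _; exact mem_univ _
  · intro j _; simp [ZMod.natCast_val, ZMod.cast_id]
  · intro k hk; exact ZMod.val_cast_of_lt (mem_range.1 hk)

private lemma val_affine (r : ℕ) [NeZero r] (α β j : ZMod r) :
    (α * j + β).val = (α.val * j.val + β.val) % r := by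
  rw [ZMod.val_add, ZMod.val_mul, Nat.mod_add_mod]

private lemma sum_affine (r : ℕ) [Fact r.Prime] (α β : ZMod r) (hα : α ≠ 0) :
    ∑ j : ZMod r, (α * j + β).val = ∑ j : ZMod r, j.val :=
  Fintype.sum_bijective _ ((Equiv.mulLeft₀ α hα).trans (Equiv.addRight β)).bijective _ _
    (fun _ => rfl)

private lemma gauss_sum (r : ℕ) (hodd : Odd r) :
    ∑ k ∈ Finset.range r, k = r * ((r - 1) / 2) := by
  obtain ⟨m, rfl⟩ := hodd
  have h := Finset.sum_range_id_mul_two (2 * m + 1)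
  have h2 : (2 * m + 1) * (2 * m + 1 - 1) = ((2 * m + 1) * m) * 2 := by
    have : 2 * m + 1 - 1 = 2 * m := by omega
    rw [this]; ring
  rw [h2] at h
  have h3 : ∑ k ∈ Finset.range (2 * m + 1), k = (2 * m + 1) * m :=
    Nat.eq_of_mul_eq_mul_right (by omega) h
  have h4 : (2 * m + 1 - 1) / 2 = m := by omega
  rw [h3, h4]

/-- sum of the quotients `(α.val * k + β.val) / r` over `k < r`. -/
private lemma sum_div (r : ℕ) [Fact r.Prime] (hodd : Odd r) (α β : ZMod r) (hα : α ≠ 0) :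
    ∑ k ∈ Finset.range r, (α.val * k + β.val) / r
      = (α.val - 1) * ((r - 1) / 2) + β.val := by
  have hr0 : 0 < r := (Fact.out : r.Prime).pos
  set a := α.val with ha
  set b := β.val with hb
  set h := (r - 1) / 2 with hh
  set S := ∑ k ∈ Finset.range r, (a * k + b) / r with hS
  have hgauss : ∑ k ∈ Finset.range r, k = r * h := gauss_sum r hodd
  have hmod : ∑ k ∈ Finset.range r, (a * k + b) % r = r * h := by
    have t1 : ∑ j : ZMod r, (α * j + β).val = ∑ k ∈ Finset.range r, (a * k + b) % r := by
      rw [← sum_val_transfer r (fun k => (a * k + b) % r)]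
      exact Fintype.sum_congr _ _ (fun j => val_affine r α β j)
    have t2 : ∑ j : ZMod r, (j : ZMod r).val = ∑ k ∈ Finset.range r, k :=
      sum_val_transfer r (fun k => k)
    rw [← t1, sum_affine r α β hα, t2, hgauss]
  have key : a * (r * h) + r * b = r * S + r * h := by
    have e1 : ∑ k ∈ Finset.range r, (a * k + b)
        = ∑ k ∈ Finset.range r, (r * ((a * k + b) / r) + (a * k + b) % r) :=
      Finset.sum_congr rfl (fun k _ => (Nat.div_add_mod _ _).symm)
    have e2 : ∑ k ∈ Finset.range r, (a * k + b) = a * (r * h) + r * b := by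
      rw [Finset.sum_add_distrib, ← Finset.mul_sum, hgauss, Finset.sum_const,
        Finset.card_range, smul_eq_mul, mul_comm r b]
    have e3 : ∑ k ∈ Finset.range r, (r * ((a * k + b) / r) + (a * k + b) % r)
        = r * S + r * h := by
      rw [Finset.sum_add_distrib, ← Finset.mul_sum, hmod, hS]
    rw [← e2, e1, e3]
  have hapos : 0 < a := ZMod.val_pos.mpr hα
  obtain ⟨a', ha'⟩ : ∃ a', a = a' + 1 := ⟨a - 1, by omega⟩
  rw [ha'] at key ⊢
  have expand : (a' + 1) * (r * h) + r * b = r * (a' * h + b) + r * h := by ring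
  rw [expand] at key
  have : r * (a' * h + b) = r * S := Nat.add_right_cancel key
  have hfin : S = a' * h + b := (Nat.eq_of_mul_eq_mul_left hr0 this).symm
  rw [hfin]
  simp

private lemma aux_if (r x k : ℕ) (hr : 0 < r) (hk : k < r) :
    (if (x + k) % r ≤ k then 1 else 0) + x / r
      = (x + k) / r + (if x % r = 0 then 1 else 0) := by
  have h1 : x / r ≤ (x + k) / r := Nat.div_le_div_right (Nat.le_add_right _ _)
  have h2 : (x + k) / r ≤ x / r + 1 := by
    have := Nat.div_le_div_right (c := r) (show x + k ≤ x + r by omega)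
    rwa [Nat.add_div_right _ hr] at this
  have e1 := Nat.div_add_mod x r
  have e2 := Nat.div_add_mod (x + k) r
  have m1 : x % r < r := Nat.mod_lt _ hr
  have m2 : (x + k) % r < r := Nat.mod_lt _ hr
  rcases (show (x + k) / r = x / r ∨ (x + k) / r = x / r + 1 by omega) with h | h <;>
    rw [h] at e2 ⊢ <;> [skip; rw [Nat.mul_add] at e2] <;> split_ifs <;> omega

private lemma pointwise (r a b k : ℕ) (hr : 0 < r) (ha : 1 ≤ a) (hk : k < r) :
    (if (a * k + b) % r ≤ k then 1 else 0) + ((a - 1) * k + b) / r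
      = (a * k + b) / r + (if ((a - 1) * k + b) % r = 0 then 1 else 0) := by
  have hx : a * k + b = ((a - 1) * k + b) + k := by
    obtain ⟨a', rfl⟩ : ∃ a', a = a' + 1 := ⟨a - 1, by omega⟩
    simp only [Nat.add_sub_cancel, Nat.add_mul, one_mul]
    omega
  rw [hx]
  exact aux_if r _ k hr hk

private lemma count_root (r : ℕ) [Fact r.Prime] (γ β : ZMod r) (hγ : γ ≠ 0) :
    ((Finset.range r).filter (fun k => (γ.val * k + β.val) % r = 0)).card = 1 := by
  haveI : NeZero r := ⟨(Fact.out : r.Prime).ne_zero⟩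
  rw [← card_val_transfer r (fun k => (γ.val * k + β.val) % r = 0)]
  have hiff : ∀ j : ZMod r, ((γ.val * j.val + β.val) % r = 0) ↔ j = γ⁻¹ * (-β) := by
    intro j
    rw [← val_affine, ZMod.val_eq_zero]
    constructor
    · intro hj
      have h2 : γ * j = -β := eq_neg_of_add_eq_zero_left hj
      have := congrArg (fun z => γ⁻¹ * z) h2
      simpa [← mul_assoc, inv_mul_cancel₀ hγ] using this
    · rintro rfl
      simp [← mul_assoc, mul_inv_cancel₀ hγ]
  rw [Finset.filter_congr (fun x _ => hiff x), Finset.filter_eq']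
  simp

theorem stmt_13 (r : ℕ) (hr : r.Prime) (hodd : Odd r) (α β : ZMod r) :
    ((α = 0 ∧ β = 0) → Nat.card {j : ZMod r // (α * j + β).val ≤ j.val} = r) ∧
    ((α = 0 ∧ β ≠ 0) → Nat.card {j : ZMod r // (α * j + β).val ≤ j.val} = r - β.val) ∧
    ((α = 1 ∧ β = 0) → Nat.card {j : ZMod r // (α * j + β).val ≤ j.val} = r) ∧
    ((α = 1 ∧ β ≠ 0) → Nat.card {j : ZMod r // (α * j + β).val ≤ j.val} = β.val) ∧
    ((α ≠ 0 ∧ α ≠ 1) →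
      Nat.card {j : ZMod r // (α * j + β).val ≤ j.val} = (r + 1) / 2) := by
  haveI : Fact r.Prime := ⟨hr⟩
  haveI : NeZero r := ⟨hr.ne_zero⟩
  have hr0 : 0 < r := hr.pos
  have hr2 : r ≠ 2 := by rintro rfl; exact (Nat.not_odd_iff_even.mpr (even_two)) hodd
  have hr3 : 3 ≤ r := by
    have := hr.two_le
    omega
  refine ⟨?_, ?_, ?_, ?_, ?_⟩
  · rintro ⟨rfl, rfl⟩
    have htriv : ∀ j : ZMod r, ((0 : ZMod r) * j + 0).val ≤ j.val := by
      simp [ZMod.val_zero]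
    rw [Nat.card_congr (Equiv.subtypeUnivEquiv htriv), Nat.card_zmod]
  · rintro ⟨rfl, hβ⟩
    rw [Nat.card_eq_fintype_card, Fintype.card_subtype]
    have hP : (Finset.univ.filter fun j : ZMod r => ((0 : ZMod r) * j + β).val ≤ j.val)
        = Finset.univ.filter (fun j : ZMod r => β.val ≤ j.val) := by
      apply Finset.filter_congr; intro x _; simp
    rw [hP, card_val_transfer r (fun k => β.val ≤ k)]
    have : (Finset.range r).filter (fun k => β.val ≤ k) = Finset.Ico β.val r := by
      ext k; simp only [mem_filter, mem_range, mem_Ico]; omega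
    rw [this, Nat.card_Ico]
  · rintro ⟨rfl, rfl⟩
    have htriv : ∀ j : ZMod r, ((1 : ZMod r) * j + 0).val ≤ j.val := by simp
    rw [Nat.card_congr (Equiv.subtypeUnivEquiv htriv), Nat.card_zmod]
  · rintro ⟨rfl, hβ⟩
    have hbpos : 0 < β.val := ZMod.val_pos.mpr hβ
    have hblt : β.val < r := ZMod.val_lt β
    rw [Nat.card_eq_fintype_card, Fintype.card_subtype]
    have hP : (Finset.univ.filter fun j : ZMod r => ((1 : ZMod r) * j + β).val ≤ j.val)
        = Finset.univ.filter (fun j : ZMod r => (j.val + β.val) % r ≤ j.val) := by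
      apply Finset.filter_congr; intro x _
      rw [val_affine, ZMod.val_one]
      simp
    rw [hP, card_val_transfer r (fun k => (k + β.val) % r ≤ k)]
    have : (Finset.range r).filter (fun k => (k + β.val) % r ≤ k)
        = Finset.Ico (r - β.val) r := by
      ext k; simp only [mem_filter, mem_range, mem_Ico]
      constructor
      · rintro ⟨hkr, hPk⟩
        refine ⟨?_, hkr⟩
        by_contra hcon
        push_neg at hcon
        rw [Nat.mod_eq_of_lt (by omega)] at hPk
        omega
      · rintro ⟨h1, h2⟩
        refine ⟨h2, ?_⟩
        rw [Nat.mod_eq_sub_mod (by omega), Nat.mod_eq_of_lt (by omega)]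
        omega
    rw [this, Nat.card_Ico]
    omega
  · rintro ⟨hα, hα1⟩
    set a := α.val with ha
    set b := β.val with hb
    have hapos : 0 < a := ZMod.val_pos.mpr hα
    have halt : a < r := ZMod.val_lt α
    have ha1 : a ≠ 1 := by
      intro h
      apply hα1
      apply ZMod.val_injective
      rw [← ha, h, ZMod.val_one]
    have ha2 : 2 ≤ a := by omega
    have hγ : α - 1 ≠ 0 := sub_ne_zero.mpr hα1
    have hγval : (α - 1).val = a - 1 := by
      have hcast : ((a - 1 : ℕ) : ZMod r) = α - 1 := by
        push_cast [Nat.cast_sub (show 1 ≤ a by omega)]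
        rw [ha, ZMod.natCast_val, ZMod.cast_id]
      rw [← hcast, ZMod.val_cast_of_lt (by omega)]
    rw [Nat.card_eq_fintype_card, Fintype.card_subtype]
    have hP : (Finset.univ.filter fun j : ZMod r => (α * j + β).val ≤ j.val)
        = Finset.univ.filter (fun j : ZMod r => (a * j.val + b) % r ≤ j.val) := by
      apply Finset.filter_congr; intro x _
      rw [val_affine]
    rw [hP, card_val_transfer r (fun k => (a * k + b) % r ≤ k), Finset.card_filter]
    set h := (r - 1) / 2 with hh
    have hsum : (∑ k ∈ Finset.range r, if (a * k + b) % r ≤ k then 1 else 0)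
          + ∑ k ∈ Finset.range r, ((a - 1) * k + b) / r
        = (∑ k ∈ Finset.range r, (a * k + b) / r)
          + ∑ k ∈ Finset.range r, (if ((a - 1) * k + b) % r = 0 then 1 else 0) := by
      rw [← Finset.sum_add_distrib, ← Finset.sum_add_distrib]
      exact Finset.sum_congr rfl
        (fun k hk => pointwise r a b k hr0 (by omega) (mem_range.1 hk))
    have hq : ∑ k ∈ Finset.range r, (a * k + b) / r = (a - 1) * h + b :=
      sum_div r hodd α β hα
    have hq' : ∑ k ∈ Finset.range r, ((a - 1) * k + b) / r = (a - 1 - 1) * h + b := by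
      have := sum_div r hodd (α - 1) β hγ
      rwa [hγval, ← hb] at this
    have hroot : (∑ k ∈ Finset.range r, if ((a - 1) * k + b) % r = 0 then 1 else 0) = 1 := by
      have := count_root r (α - 1) β hγ
      rwa [hγval, ← hb, Finset.card_filter] at this
    rw [hq, hq', hroot] at hsum
    have hsplit : (a - 1) * h = (a - 1 - 1) * h + h := by
      obtain ⟨m, hm⟩ : ∃ m, a = m + 2 := ⟨a - 2, by omega⟩
      have e1 : m + 2 - 1 = m + 1 := by omega
      have e2 : m + 2 - 1 - 1 = m := by omega
      rw [hm, e2, e1, Nat.add_mul, one_mul]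
    rw [hsplit] at hsum
    have hN : (∑ k ∈ Finset.range r, if (a * k + b) % r ≤ k then 1 else 0) = h + 1 := by
      omega
    rw [hN]
    obtain ⟨m, rfl⟩ := hodd
    omega
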